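/- arXiv:1310.1630 — 3 statements merged into one kernel-verified Lean document; each statement's English description precedes it below -/
import Mathlib

section
/- Let Y_1, Y_2, … be i.i.d. real random variables whose distribution function F is absolutely continuous with a unique quantile inverse Q on (0,1), with E[Y_1] = 0, E[Y_1²] = 1 and E[|Y_1|^{2+ε}] < ∞ for some ε > 0. Then (1/√n) E[Y_(n) − Y_(1)] → 0 as n → ∞, where Y_(1) = min_{1≤i≤n} Y_i and Y_(n) = max_{1≤i≤n} Y_i. -/
open MeasureTheory ProbabilityTheory Filter Set

/-- Measurability of a finite `inf'` of measurable functions. -/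
lemma my_measurable_inf' {δ α : Type*} [MeasurableSpace δ] [MeasurableSpace α]
    [SemilatticeInf α] [MeasurableInf₂ α] {ι : Type*} {s : Finset ι} (hs : s.Nonempty)
    {f : ι → δ → α} (hf : ∀ n ∈ s, Measurable (f n)) : Measurable (s.inf' hs f) :=
  Finset.inf'_induction hs _ (fun _f hf _g hg => hf.inf' hg) fun n hn => hf n hn

/-- Pointwise bound: `|a| ≤ t + |a|^q / t^(q-1)` for `t > 0`, `q ≥ 1`. -/
lemma my_abs_le {a t q : ℝ} (ht : 0 < t) (hq : 1 ≤ q) :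
    |a| ≤ t + |a| ^ q / t ^ (q - 1) := by
  rcases le_or_gt |a| t with h | h
  · have h1 : 0 ≤ |a| ^ q / t ^ (q - 1) :=
      div_nonneg (Real.rpow_nonneg (abs_nonneg a) q) (Real.rpow_nonneg ht.le _)
    linarith
  · have ha : 0 < |a| := ht.trans h
    have h2 : t ^ (q - 1) ≤ |a| ^ (q - 1) :=
      Real.rpow_le_rpow ht.le h.le (by linarith)
    have h3 : |a| ^ q = |a| * |a| ^ (q - 1) := by
      rw [← Real.rpow_one_add' ha.le (by intro hc; linarith)]
      ring_nf
    have ht' : 0 < t ^ (q - 1) := Real.rpow_pos_of_pos ht _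
    have h4 : |a| ≤ |a| ^ q / t ^ (q - 1) := by
      rw [h3, le_div_iff₀ ht']
      exact mul_le_mul_of_nonneg_left h2 ha.le
    linarith

/-- For i.i.d. `Y₁, Y₂, …` with absolutely continuous law, unique quantile
inverse `Q` on (0,1), mean 0, second moment 1, and a finite `(2+ε)`-th absolute moment,
`(1/√n) E[Y_(n) - Y_(1)] → 0` as `n → ∞`. -/
theorem stmt4 {Ω : Type*} [MeasurableSpace Ω] (P : Measure Ω) [IsProbabilityMeasure P]
    (Y : ℕ → Ω → ℝ) (μ : Measure ℝ) (f Q : ℝ → ℝ) (ε : ℝ)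
    (hmeas : ∀ i, Measurable (Y i))
    (hindep : iIndepFun Y P)
    (hdist : ∀ i, Measure.map (Y i) P = μ)
    -- absolutely continuous with density `f`, `Q` the unique quantile inverse on (0,1)
    (hf : ∀ x, 0 ≤ f x)
    (hdens : μ = volume.withDensity fun x => ENNReal.ofReal (f x))
    (hQF : ∀ p ∈ Ioo (0 : ℝ) 1, (μ (Iic (Q p))).toReal = p)
    (hQuniq : ∀ p ∈ Ioo (0 : ℝ) 1, ∀ x : ℝ, (μ (Iic x)).toReal = p → x = Q p)
    -- mean 0, second moment 1
    (hmean : ∫ x, x ∂μ = 0)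
    (hvar : ∫ x, x ^ 2 ∂μ = 1)
    -- finite (2+ε)-th absolute moment
    (hε : 0 < ε)
    (hmom : Integrable (fun x => |x| ^ (2 + ε)) μ) :
    Tendsto
      (fun n : ℕ => (1 / Real.sqrt n) *
        ∫ ω, ((⨆ i : Fin n, Y (i : ℕ) ω) - ⨅ i : Fin n, Y (i : ℕ) ω) ∂P)
      atTop (nhds 0) := by
  set q : ℝ := 2 + ε with hq_def
  have hq1 : (1 : ℝ) ≤ q := by simp only [hq_def]; linarith
  have hq2 : (2 : ℝ) ≤ q := by simp only [hq_def]; linarith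
  have hq0 : (0 : ℝ) < q := by linarith
  set C : ℝ := ∫ x, |x| ^ q ∂μ with hC_def
  have hC0 : 0 ≤ C := integral_nonneg fun x => Real.rpow_nonneg (abs_nonneg x) q
  have habs_meas : Measurable fun x : ℝ => |x| ^ q := by fun_prop
  have hYint : ∀ i, Integrable (fun ω => |Y i ω| ^ q) P := fun i =>
    (integrable_map_measure habs_meas.aestronglyMeasurable
      (hmeas i).aemeasurable).mp (by rw [hdist i]; exact hmom)
  have hYval : ∀ i, ∫ ω, |Y i ω| ^ q ∂P = C := by
    intro i
    rw [hC_def, ← hdist i, integral_map (hmeas i).aemeasurable habs_meas.aestronglyMeasurable]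
  -- the key bounds for each n ≥ 1
  have key : ∀ n : ℕ, 1 ≤ n →
      0 ≤ ∫ ω, ((⨆ i : Fin n, Y (i : ℕ) ω) - ⨅ i : Fin n, Y (i : ℕ) ω) ∂P ∧
      ∫ ω, ((⨆ i : Fin n, Y (i : ℕ) ω) - ⨅ i : Fin n, Y (i : ℕ) ω) ∂P
        ≤ 2 * (1 + C) * (n : ℝ) ^ (1 / q) := by
    intro n hn
    have hn0 : (0 : ℝ) < n := by exact_mod_cast hn
    haveI : Nonempty (Fin n) := Fin.pos_iff_nonempty.mp hn
    set t : ℝ := (n : ℝ) ^ (1 / q) with ht_def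
    have ht0 : 0 < t := Real.rpow_pos_of_pos hn0 _
    have ht' : 0 < t ^ (q - 1) := Real.rpow_pos_of_pos ht0 _
    have htq : t * t ^ (q - 1) = (n : ℝ) := by
      have e1 : t * t ^ (q - 1) = t ^ (1 + (q - 1)) := by
        rw [Real.rpow_add ht0, Real.rpow_one]
      have e2 : (1 : ℝ) + (q - 1) = q := by ring
      rw [e1, e2, ht_def, ← Real.rpow_mul hn0.le, one_div,
        inv_mul_cancel₀ (ne_of_gt hq0), Real.rpow_one]
    set S : Ω → ℝ := fun ω => ∑ i : Fin n, |Y (i : ℕ) ω| ^ q with hS_def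
    have hS_int : Integrable S P := integrable_finset_sum _ fun i _ => hYint _
    have hS_val : ∫ ω, S ω ∂P = n * C := by
      rw [hS_def]; rw [integral_finset_sum _ fun i _ => hYint _]
      simp [hYval]
    have hbd : ∀ (i : Fin n) ω, |Y (i : ℕ) ω| ≤ t + S ω / t ^ (q - 1) := by
      intro i ω
      refine (my_abs_le ht0 hq1).trans ?_
      gcongr
      exact Finset.single_le_sum (f := fun j : Fin n => |Y (j : ℕ) ω| ^ q)
        (fun j _ => Real.rpow_nonneg (abs_nonneg _) q) (Finset.mem_univ i)
    have hsup_le : ∀ ω, (⨆ i : Fin n, Y (i : ℕ) ω) ≤ t + S ω / t ^ (q - 1) :=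
      fun ω => ciSup_le fun i => (le_abs_self _).trans (hbd i ω)
    have hinf_ge : ∀ ω, -(t + S ω / t ^ (q - 1)) ≤ ⨅ i : Fin n, Y (i : ℕ) ω := by
      intro ω
      refine le_ciInf fun i => ?_
      have := (neg_le_abs (Y (i : ℕ) ω)).trans (hbd i ω)
      linarith
    have hdiff_le : ∀ ω, (⨆ i : Fin n, Y (i : ℕ) ω) - (⨅ i : Fin n, Y (i : ℕ) ω)
        ≤ 2 * t + 2 / t ^ (q - 1) * S ω := by
      intro ω
      have h1 := hsup_le ω
      have h2 := hinf_ge ω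
      have h3 : S ω / t ^ (q - 1) = 1 / t ^ (q - 1) * S ω := by ring
      rw [h3] at h1 h2
      have h4 : 2 / t ^ (q - 1) * S ω = 2 * (1 / t ^ (q - 1) * S ω) := by ring
      rw [h4]
      linarith
    have hdiff_nonneg : ∀ ω, 0 ≤ (⨆ i : Fin n, Y (i : ℕ) ω) - ⨅ i : Fin n, Y (i : ℕ) ω := by
      intro ω
      have h1 : (⨅ i : Fin n, Y (i : ℕ) ω) ≤ Y ((⟨0, hn⟩ : Fin n) : ℕ) ω :=
        ciInf_le (f := fun i : Fin n => Y (i : ℕ) ω)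
          (Set.Finite.bddBelow (Set.finite_range _)) ⟨0, hn⟩
      have h2 : Y ((⟨0, hn⟩ : Fin n) : ℕ) ω ≤ ⨆ i : Fin n, Y (i : ℕ) ω :=
        le_ciSup (f := fun i : Fin n => Y (i : ℕ) ω)
          (Set.Finite.bddAbove (Set.finite_range _)) ⟨0, hn⟩
      linarith
    have hsup_meas : Measurable fun ω => ⨆ i : Fin n, Y (i : ℕ) ω := by
      have h1 : (fun ω => ⨆ i : Fin n, Y (i : ℕ) ω)
          = Finset.univ.sup' Finset.univ_nonempty (fun i : Fin n => Y (i : ℕ)) := by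
        funext ω; rw [Finset.sup'_apply, Finset.sup'_univ_eq_ciSup]
      rw [h1]
      exact Finset.measurable_sup' _ fun i _ => hmeas _
    have hinf_meas : Measurable fun ω => ⨅ i : Fin n, Y (i : ℕ) ω := by
      have h1 : (fun ω => ⨅ i : Fin n, Y (i : ℕ) ω)
          = Finset.univ.inf' Finset.univ_nonempty (fun i : Fin n => Y (i : ℕ)) := by
        funext ω; rw [Finset.inf'_apply, Finset.inf'_univ_eq_ciInf]
      rw [h1]
      exact my_measurable_inf' _ fun i _ => hmeas _
    have hK_int : Integrable (fun ω => 2 * t + 2 / t ^ (q - 1) * S ω) P :=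
      (integrable_const (2 * t)).add (hS_int.const_mul _)
    have hdiff_int : Integrable
        (fun ω => (⨆ i : Fin n, Y (i : ℕ) ω) - ⨅ i : Fin n, Y (i : ℕ) ω) P := by
      refine hK_int.mono' (hsup_meas.sub hinf_meas).aestronglyMeasurable ?_
      filter_upwards with ω
      rw [Real.norm_eq_abs, abs_of_nonneg (hdiff_nonneg ω)]
      exact hdiff_le ω
    constructor
    · exact integral_nonneg fun ω => hdiff_nonneg ω
    · calc ∫ ω, ((⨆ i : Fin n, Y (i : ℕ) ω) - ⨅ i : Fin n, Y (i : ℕ) ω) ∂P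
          ≤ ∫ ω, (2 * t + 2 / t ^ (q - 1) * S ω) ∂P :=
            integral_mono hdiff_int hK_int fun ω => hdiff_le ω
        _ = 2 * t + 2 / t ^ (q - 1) * (n * C) := by
            rw [integral_add (integrable_const _) (hS_int.const_mul _),
              integral_const, integral_const_mul, hS_val]
            simp [measure_univ]
        _ = 2 * (1 + C) * t := by
            rw [← htq]; field_simp
  -- the bounding sequence tends to 0
  have hexp_neg : 1 / q - 1 / 2 < 0 := by
    have h1 : 1 / q < 1 / 2 := by
      apply div_lt_div_of_pos_left (by norm_num) (by norm_num) (by linarith)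
    linarith
  have hB : Tendsto (fun n : ℕ => 2 * (1 + C) * (n : ℝ) ^ (1 / q - 1 / 2)) atTop (nhds 0) := by
    have h1 : Tendsto (fun x : ℝ => x ^ (-(1 / 2 - 1 / q))) atTop (nhds 0) :=
      tendsto_rpow_neg_atTop (by linarith)
    have h2 : Tendsto (fun n : ℕ => ((n : ℝ)) ^ (1 / q - 1 / 2)) atTop (nhds 0) := by
      have h3 := h1.comp (tendsto_natCast_atTop_atTop (R := ℝ))
      have h4 : (fun n : ℕ => ((n : ℝ)) ^ (1 / q - 1 / 2))
          = (fun x : ℝ => x ^ (-(1 / 2 - 1 / q))) ∘ (fun n : ℕ => (n : ℝ)) := by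
        funext n; simp only [Function.comp_apply]; congr 1; ring
      rw [h4]; exact h3
    have := h2.const_mul (2 * (1 + C))
    simpa using this
  refine squeeze_zero' ?_ ?_ hB
  · filter_upwards [eventually_ge_atTop 1] with n hn
    have hn0 : (0 : ℝ) < n := by exact_mod_cast hn
    exact mul_nonneg (by positivity) (key n hn).1
  · filter_upwards [eventually_ge_atTop 1] with n hn
    have hn0 : (0 : ℝ) < n := by exact_mod_cast hn
    have hsq : Real.sqrt n = (n : ℝ) ^ (1 / 2 : ℝ) := Real.sqrt_eq_rpow _
    have h1 : (1 : ℝ) / Real.sqrt n = (n : ℝ) ^ (-(1 / 2) : ℝ) := by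
      rw [hsq, Real.rpow_neg hn0.le, one_div]
    calc (1 / Real.sqrt n) * ∫ ω, ((⨆ i : Fin n, Y (i : ℕ) ω) - ⨅ i : Fin n, Y (i : ℕ) ω) ∂P
        ≤ (1 / Real.sqrt n) * (2 * (1 + C) * (n : ℝ) ^ (1 / q)) := by
          apply mul_le_mul_of_nonneg_left (key n hn).2 (by positivity)
      _ = 2 * (1 + C) * (n : ℝ) ^ (1 / q - 1 / 2) := by
          rw [h1, Real.rpow_sub hn0]
          rw [Real.rpow_neg hn0.le]
          field_simp
end

section
/- For each n, let Z_1,…,Z_n be i.i.d. standard normal random variables and let N_1,…,N_n be i.i.d. Bernoulli random variables with success probability λ/n, independent of the Z_i, where λ > 0 is fixed. Fix μ ∈ ℝ, σ > 0, h > 0, and set W_i = μ/n + (σ/√n) Z_i + h N_i for 1 ≤ i ≤ n. Let k* = #{i : N_i = 0} be the number of observations in the first (no-jump) cluster, and let G_n denote the ECF of W_1,…,W_n. Then P( G_n(k/n) ≤ 0 for every integer k with k*+1 ≤ k ≤ n−1 ) → 1 as n → ∞. -/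
open MeasureTheory ProbabilityTheory Filter Set
open scoped Classical ENNReal NNReal

/-- The order statistics (1-based) of the sample `W`: `sortedOf W j` is `W_(j)`. -/
noncomputable def sortedOf {n : ℕ} (W : Fin n → ℝ) : ℕ → ℝ :=
  fun j => ((List.ofFn W).insertionSort (· ≤ ·)).getD (j - 1) 0

/-- The empirical cross-over function: `ecf n W k` is `G_n ((k-1)/n)` for `1 ≤ k ≤ n-1`. -/
noncomputable def ecf (n : ℕ) (W : Fin n → ℝ) (k : ℕ) : ℝ :=
  (1 / (k : ℝ)) * ∑ j ∈ Finset.Icc 1 k, sortedOf W j - sortedOf W k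
    + (1 / ((n : ℝ) - (k : ℝ))) * ∑ j ∈ Finset.Icc (k + 1) n, sortedOf W j
    - sortedOf W (k + 1)

/-! ### Auxiliary lemmas: sorted lists -/

lemma countP_eq_sum_ite {α : Type*} (l : List α) (q : α → Bool) :
    l.countP q = (l.map fun x => if q x then 1 else 0).sum := by
  induction l with
  | nil => simp
  | cons a t ih =>
    rw [List.countP_cons, List.map_cons, List.sum_cons, ih]
    by_cases h : q a <;> simp [h, Nat.add_comm]

lemma countP_ofFn (n : ℕ) (W : Fin n → ℝ) (p : ℝ → Prop) [DecidablePred p] :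
    (List.ofFn W).countP (fun x => decide (p x)) = (Finset.univ.filter fun i => p (W i)).card := by
  rw [List.ofFn_eq_map, List.countP_map, Finset.card_filter, Fin.univ_def]
  rw [countP_eq_sum_ite]
  simp only [Function.comp_apply, decide_eq_true_eq]
  rfl

lemma sorted_take_drop (l : List ℝ) (hs : l.Pairwise (· ≤ ·)) (c : ℝ) :
    (∀ x ∈ l.take (l.countP (fun x => decide (x ≤ c))), x ≤ c) ∧
    (∀ x ∈ l.drop (l.countP (fun x => decide (x ≤ c))), ¬ x ≤ c) := by
  induction l with
  | nil => simp
  | cons a t ih =>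
    rw [List.pairwise_cons] at hs
    obtain ⟨ha, hts⟩ := hs
    obtain ⟨ih1, ih2⟩ := ih hts
    rcases le_or_gt a c with hac | hac
    · have hcp : (a :: t).countP (fun x => decide (x ≤ c))
        = t.countP (fun x => decide (x ≤ c)) + 1 := by
        rw [List.countP_cons]
        simp [hac]
      rw [hcp]
      constructor
      · intro x hx
        rw [List.take_succ_cons] at hx
        rcases List.mem_cons.1 hx with rfl | hx
        · exact hac
        · exact ih1 x hx
      · intro x hx
        rw [List.drop_succ_cons] at hx
        exact ih2 x hx
    · have hcnt : t.countP (fun x => decide (x ≤ c)) = 0 := by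
        rw [List.countP_eq_zero]
        intro x hx
        simpa using (hac.trans_le (ha x hx)).not_ge
      have hcp : (a :: t).countP (fun x => decide (x ≤ c)) = 0 := by
        rw [List.countP_cons, hcnt]
        simp [hac.not_ge]
      rw [hcp]
      refine ⟨by simp, ?_⟩
      intro x hx
      simp only [List.drop_zero] at hx
      rcases List.mem_cons.1 hx with rfl | hx
      · exact hac.not_ge
      · exact (hac.trans_le (ha x hx)).not_ge

section S
variable {n : ℕ} (W : Fin n → ℝ) (c : ℝ)

lemma aux_basic :
    (((List.ofFn W).insertionSort (· ≤ ·)).length = n) ∧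
    (((List.ofFn W).insertionSort (· ≤ ·)).countP (fun x => decide (x ≤ c))
      = (Finset.univ.filter fun i => W i ≤ c).card) := by
  have hperm := List.perm_insertionSort (· ≤ ·) (List.ofFn W)
  constructor
  · rw [hperm.length_eq, List.length_ofFn]
  · rw [hperm.countP_eq, countP_ofFn]

lemma sortedOf_le {j : ℕ} (hj1 : 1 ≤ j)
    (hjK : j ≤ (Finset.univ.filter fun i => W i ≤ c).card) :
    sortedOf W j ≤ c := by
  set l := (List.ofFn W).insertionSort (· ≤ ·) with hl
  obtain ⟨hlen, hK⟩ := aux_basic W c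
  have hKn : (Finset.univ.filter fun i => W i ≤ c).card ≤ n :=
    le_trans (Finset.card_filter_le _ _) (by simp)
  have hjl : j - 1 < l.length := by rw [hlen]; omega
  have heq : sortedOf W j = l[j-1] := List.getD_eq_getElem l 0 hjl
  rw [heq]
  have hmem : l[j-1] ∈ l.take (l.countP (fun x => decide (x ≤ c))) := by
    have hjk : j - 1 < l.countP (fun x => decide (x ≤ c)) := by rw [hK]; omega
    have : (l.take (l.countP (fun x => decide (x ≤ c))))[j-1]'(by
      rw [List.length_take]; omega) = l[j-1] := List.getElem_take ..
    rw [← this]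
    exact List.getElem_mem _
  exact (sorted_take_drop l (List.pairwise_insertionSort _ _) c).1 _ hmem

lemma not_sortedOf_le {j : ℕ}
    (hK : (Finset.univ.filter fun i => W i ≤ c).card < j) (hjn : j ≤ n) :
    ¬ sortedOf W j ≤ c := by
  set l := (List.ofFn W).insertionSort (· ≤ ·) with hl
  obtain ⟨hlen, hK'⟩ := aux_basic W c
  have hjl : j - 1 < l.length := by rw [hlen]; omega
  have heq : sortedOf W j = l[j-1] := List.getD_eq_getElem l 0 hjl
  rw [heq]
  set K := l.countP (fun x => decide (x ≤ c)) with hKdef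
  have hmem : l[j-1] ∈ l.drop K := by
    have h1 : K + (j - 1 - K) = j - 1 := by rw [hK']; omega
    have h2 : (l.drop K)[j-1-K]'(by rw [List.length_drop]; omega)
        = l[K + (j - 1 - K)]'(by omega) := List.getElem_drop ..
    have h3 : l[K + (j - 1 - K)]'(by omega) = l[j-1]'(by omega) := by
      congr 1
    rw [← h3, ← h2]
    exact List.getElem_mem _
  exact (sorted_take_drop l (List.pairwise_insertionSort _ _) c).2 _ hmem

lemma sortedOf_mem {j : ℕ} (hj1 : 1 ≤ j) (hjn : j ≤ n) : ∃ i, sortedOf W j = W i := by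
  set l := (List.ofFn W).insertionSort (· ≤ ·) with hl
  obtain ⟨hlen, -⟩ := aux_basic W 0
  have hjl : j - 1 < l.length := by rw [hlen]; omega
  have heq : sortedOf W j = l[j-1] := List.getD_eq_getElem l 0 hjl
  have : l[j-1] ∈ List.ofFn W :=
    (List.perm_insertionSort (· ≤ ·) (List.ofFn W)).mem_iff.1 (List.getElem_mem _)
  obtain ⟨i, hi⟩ := (List.mem_ofFn).1 this
  exact ⟨i, by rw [heq, ← hi]⟩

lemma sortedOf_of_gt {j : ℕ} (hjn : n < j) : sortedOf W j = 0 := by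
  obtain ⟨hlen, -⟩ := aux_basic W 0
  exact List.getD_eq_default _ _ (by rw [hlen]; omega)

end S

lemma ecf_nonpos {n : ℕ} (W : Fin n → ℝ) (c₀ L b : ℝ)
    (hcL : c₀ ≤ L) (hLb : L ≤ b) (hge : 4 * (b - L) ≤ b - c₀)
    (hW : ∀ i, W i ≤ c₀ ∨ (L ≤ W i ∧ W i ≤ b))
    (hK : n ≤ 2 * (Finset.univ.filter fun i => W i ≤ c₀).card)
    {m : ℕ} (hm1 : (Finset.univ.filter fun i => W i ≤ c₀).card + 2 ≤ m)
    (hm2 : m ≤ n) :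
    ecf n W m ≤ 0 := by
  have hall : ∀ i, W i ≤ b := by
    intro i
    rcases hW i with h1 | ⟨h1, h2⟩
    · linarith
    · exact h2
  have hhi : ∀ i, ¬ W i ≤ c₀ → L ≤ W i := by
    intro i hi
    rcases hW i with h1 | ⟨h1, h2⟩
    · exact absurd h1 hi
    · exact h1
  have s_all : ∀ j, 1 ≤ j → j ≤ n → sortedOf W j ≤ b := by
    intro j h1 h2
    obtain ⟨i, hi⟩ := sortedOf_mem W h1 h2
    rw [hi]; exact hall i
  have s_low : ∀ j, 1 ≤ j → j ≤ (Finset.univ.filter fun i => W i ≤ c₀).card →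
      sortedOf W j ≤ c₀ := fun j h1 h2 => sortedOf_le W c₀ h1 h2
  have s_hi : ∀ j, (Finset.univ.filter fun i => W i ≤ c₀).card < j → j ≤ n →
      L ≤ sortedOf W j := by
    intro j h1 h2
    obtain ⟨i, hi⟩ := sortedOf_mem W (by omega) h2
    have := not_sortedOf_le W c₀ h1 h2
    rw [hi] at this ⊢
    exact hhi i this
  set K := (Finset.univ.filter fun i => W i ≤ c₀).card with hKdef
  clear_value K
  have hKm : K + 2 ≤ m := hm1
  have hm0 : 0 < m := by omega
  have hmr : (0:ℝ) < m := by exact_mod_cast hm0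
  have hsplit : Finset.Icc 1 m = Finset.Ioc 0 K ∪ Finset.Ioc K m := by
    rw [← Finset.Icc_add_one_left_eq_Ioc]
    ext x
    simp only [Finset.mem_Icc, Finset.mem_union, Finset.mem_Ioc]
    omega
  have hS1 : ∑ j ∈ Finset.Icc 1 m, sortedOf W j ≤ (K:ℝ) * c₀ + ((m:ℝ) - K) * b := by
    rw [hsplit, Finset.sum_union (by
      rw [Finset.disjoint_left]; intro x hx hy
      simp only [Finset.mem_Ioc] at hx hy; omega)]
    have h1 : ∑ j ∈ Finset.Ioc 0 K, sortedOf W j ≤ (K:ℝ) * c₀ := by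
      calc ∑ j ∈ Finset.Ioc 0 K, sortedOf W j ≤ (Finset.Ioc 0 K).card • c₀ :=
            Finset.sum_le_card_nsmul _ _ _ (fun j hj => by
              simp only [Finset.mem_Ioc] at hj
              exact s_low j hj.1 hj.2)
        _ = (K:ℝ) * c₀ := by rw [Nat.card_Ioc, nsmul_eq_mul]; norm_num
    have h2 : ∑ j ∈ Finset.Ioc K m, sortedOf W j ≤ ((m:ℝ) - K) * b := by
      calc ∑ j ∈ Finset.Ioc K m, sortedOf W j ≤ (Finset.Ioc K m).card • b :=
            Finset.sum_le_card_nsmul _ _ _ (fun j hj => by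
              simp only [Finset.mem_Ioc] at hj
              exact s_all j (by omega) (by omega))
        _ = ((m:ℝ) - K) * b := by
            rw [Nat.card_Ioc, nsmul_eq_mul, Nat.cast_sub (by omega)]
    linarith
  have hKr : (0:ℝ) ≤ K := by positivity
  have hmn : (m:ℝ) ≤ n := by exact_mod_cast hm2
  have hnK : (n:ℝ) ≤ 2 * K := by exact_mod_cast hK
  have hKmr : (K:ℝ) + 2 ≤ m := by exact_mod_cast hKm
  have hsm : L ≤ sortedOf W m := s_hi m (by omega) hm2
  have hterm1 : (1 / (m:ℝ)) * ∑ j ∈ Finset.Icc 1 m, sortedOf W j - sortedOf W m ≤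
      ((K:ℝ) * c₀ + ((m:ℝ) - K) * b) / m - L := by
    have := mul_le_mul_of_nonneg_left hS1 (le_of_lt (by positivity : (0:ℝ) < 1/m))
    simp only [one_div, inv_mul_eq_div] at this ⊢
    linarith
  rcases eq_or_lt_of_le hm2 with rfl | hmn'
  · -- m = n
    have hz : sortedOf W (m + 1) = 0 := sortedOf_of_gt W (by omega)
    have hempty : Finset.Icc (m+1) m = ∅ := by
      apply Finset.Icc_eq_empty; omega
    rw [ecf, hz, hempty, Finset.sum_empty, mul_zero]
    have h1 : ((K:ℝ) * c₀ + ((m:ℝ) - K) * b) / m ≤ L := by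
      rw [div_le_iff₀ hmr]
      nlinarith [mul_nonneg hKr (by linarith : (0:ℝ) ≤ (b - c₀) - 4 * (b - L)),
        mul_nonneg (by linarith : (0:ℝ) ≤ 2*(K:ℝ) - m) (by linarith : (0:ℝ) ≤ b - L)]
    linarith
  · -- m < n
    have hnm : (0:ℝ) < (n:ℝ) - m := by
      have : (m:ℝ) + 1 ≤ n := by exact_mod_cast hmn'
      linarith
    have hS2 : ∑ j ∈ Finset.Icc (m+1) n, sortedOf W j ≤ ((n:ℝ) - m) * b := by
      calc ∑ j ∈ Finset.Icc (m+1) n, sortedOf W j ≤ (Finset.Icc (m+1) n).card • b :=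
            Finset.sum_le_card_nsmul _ _ _ (fun j hj => by
              simp only [Finset.mem_Icc] at hj
              exact s_all j (by omega) hj.2)
        _ = ((n:ℝ) - m) * b := by
            rw [Nat.card_Icc, nsmul_eq_mul, Nat.cast_sub (by omega)]
            push_cast; ring
    have hterm2 : (1 / ((n:ℝ) - m)) * ∑ j ∈ Finset.Icc (m+1) n, sortedOf W j ≤ b := by
      rw [one_div, inv_mul_eq_div, div_le_iff₀ hnm]
      linarith
    have hsm1 : L ≤ sortedOf W (m + 1) := s_hi (m+1) (by omega) (by omega)
    rw [ecf]
    have hmain : ((K:ℝ) * c₀ + ((m:ℝ) - K) * b) / m ≤ L - (b - L) := by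
      rw [div_le_iff₀ hmr]
      nlinarith [mul_nonneg hKr (by linarith : (0:ℝ) ≤ (b - c₀) - 4 * (b - L)),
        mul_nonneg (by linarith : (0:ℝ) ≤ 2*(K:ℝ) - m) (by linarith : (0:ℝ) ≤ b - L)]
    linarith


lemma tail_half (t c : ℝ) (hc : c^2 = 1) :
    gaussianReal 0 1 {x | t ≤ c * x} ≤ ENNReal.ofReal (Real.exp (1/2 - t)) := by
  have hs : MeasurableSet {x : ℝ | t ≤ c * x} :=
    measurableSet_le measurable_const (measurable_id.const_mul c)
  calc gaussianReal 0 1 {x | t ≤ c * x}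
      = ∫⁻ x in {x | t ≤ c * x}, gaussianPDF 0 1 x := gaussianReal_apply 0 one_ne_zero _
    _ ≤ ∫⁻ x in {x | t ≤ c * x}, ENNReal.ofReal (Real.exp (c * x - t)) * gaussianPDF 0 1 x := by
        apply setLIntegral_mono
        · exact (ENNReal.measurable_ofReal.comp ((measurable_id.const_mul c).sub
            measurable_const).exp).mul (measurable_gaussianPDF 0 1)
        · intro x hx
          have h1 : (1:ℝ≥0∞) ≤ ENNReal.ofReal (Real.exp (c * x - t)) := by
            rw [ENNReal.one_le_ofReal]
            have : (0:ℝ) ≤ c * x - t := by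
              simp only [Set.mem_setOf_eq] at hx; linarith
            calc (1:ℝ) = Real.exp 0 := (Real.exp_zero).symm
              _ ≤ Real.exp (c * x - t) := Real.exp_le_exp.2 this
          calc gaussianPDF 0 1 x = 1 * gaussianPDF 0 1 x := (one_mul _).symm
            _ ≤ ENNReal.ofReal (Real.exp (c * x - t)) * gaussianPDF 0 1 x :=
              mul_le_mul_left h1 _
    _ ≤ ∫⁻ x, ENNReal.ofReal (Real.exp (c * x - t)) * gaussianPDF 0 1 x :=
        setLIntegral_le_lintegral _ _
    _ = ∫⁻ x, ENNReal.ofReal (Real.exp (1/2 - t)) * gaussianPDF c 1 x := by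
        congr 1
        funext x
        rw [gaussianPDF, gaussianPDF, ← ENNReal.ofReal_mul (Real.exp_nonneg _),
          ← ENNReal.ofReal_mul (Real.exp_nonneg _)]
        congr 1
        simp only [gaussianPDFReal]
        push_cast
        rw [mul_left_comm, mul_left_comm (Real.exp (1/2 - t)), ← Real.exp_add, ← Real.exp_add]
        congr 2
        linear_combination hc/2
    _ = ENNReal.ofReal (Real.exp (1/2 - t)) := by
        rw [lintegral_const_mul _ (measurable_gaussianPDF _ _),
          lintegral_gaussianPDF_eq_one c one_ne_zero, mul_one]

lemma gaussian_tail (t : ℝ) :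
    gaussianReal 0 1 {x | t < |x|} ≤ ENNReal.ofReal (2 * Real.exp (1/2 - t)) := by
  have hsub : {x : ℝ | t < |x|} ⊆ {x | t ≤ 1 * x} ∪ {x | t ≤ (-1) * x} := by
    intro x hx
    simp only [Set.mem_setOf_eq, Set.mem_union, one_mul, neg_one_mul] at *
    rcases abs_cases x with ⟨h1, _⟩ | ⟨h1, _⟩
    · left; rw [h1] at hx; linarith
    · right; rw [h1] at hx; linarith
  calc gaussianReal 0 1 {x | t < |x|}
      ≤ gaussianReal 0 1 ({x | t ≤ 1 * x} ∪ {x | t ≤ (-1) * x}) := measure_mono hsub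
    _ ≤ gaussianReal 0 1 {x | t ≤ 1 * x} + gaussianReal 0 1 {x | t ≤ (-1) * x} :=
        measure_union_le _ _
    _ ≤ ENNReal.ofReal (Real.exp (1/2 - t)) + ENNReal.ofReal (Real.exp (1/2 - t)) :=
        add_le_add (tail_half t 1 (by norm_num)) (tail_half t (-1) (by norm_num))
    _ = ENNReal.ofReal (2 * Real.exp (1/2 - t)) := by
        rw [← ENNReal.ofReal_add (Real.exp_nonneg _) (Real.exp_nonneg _)]
        congr 1; ring


/-! ### Main theorem -/

/-- In the triangular array `W_i = μ/n + (σ/√n) Z_i + h N_i` with `Z_i` i.i.d.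
standard normal and `N_i` i.i.d. Bernoulli(λ/n) independent of the `Z_i`, and
`k* = #{i : N_i = 0}`, the probability that `G_n(k/n) ≤ 0` for every integer
`k* + 1 ≤ k ≤ n - 1` tends to one. (Recall `G_n(k/n) = ecf n W (k+1)`.) -/
theorem stmt6 (lam μc σ h : ℝ) (hlam : 0 < lam) (hσ : 0 < σ) (hh : 0 < h)
    (Ω : ℕ → Type*) [∀ n, MeasurableSpace (Ω n)] (P : ∀ n, Measure (Ω n))
    [∀ n, IsProbabilityMeasure (P n)]
    (Z N : ∀ n : ℕ, Fin n → Ω n → ℝ)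
    (hmeasZ : ∀ n i, Measurable (Z n i)) (hmeasN : ∀ n i, Measurable (N n i))
    -- all `2n` variables `Z_1,…,Z_n,N_1,…,N_n` are mutually independent
    (hindep : ∀ n, iIndepFun (Sum.elim (Z n) (N n)) (P n))
    (hZ : ∀ n i, Measure.map (Z n i) (P n) = gaussianReal 0 1)
    (hN : ∀ n i, Measure.map (N n i) (P n) =
      ENNReal.ofReal (1 - lam / n) • Measure.dirac (0 : ℝ) +
        ENNReal.ofReal (lam / n) • Measure.dirac (1 : ℝ)) :
    Tendsto
      (fun n : ℕ => P n {ω | ∀ k : ℕ,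
        (Finset.univ.filter fun i : Fin n => N n i ω = 0).card + 1 ≤ k → k ≤ n - 1 →
        ecf n (fun i : Fin n => μc / n + (σ / Real.sqrt n) * Z n i ω + h * N n i ω)
          (k + 1) ≤ 0})
      atTop (nhds 1) := by
  -- threshold
  set t : ℕ → ℝ := fun n => h * Real.sqrt n / (16 * σ) with ht
  -- target events
  set E : ∀ n : ℕ, Set (Ω n) := fun n => {ω | ∀ k : ℕ,
        (Finset.univ.filter fun i : Fin n => N n i ω = 0).card + 1 ≤ k → k ≤ n - 1 →
        ecf n (fun i : Fin n => μc / n + (σ / Real.sqrt n) * Z n i ω + h * N n i ω)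
          (k + 1) ≤ 0} with hE
  -- deterministic core: good ω are in E n
  have key : ∀ n : ℕ, 1 ≤ n → ∀ ω : Ω n,
      (∀ i, N n i ω = 0 ∨ N n i ω = 1) →
      (2 * (Finset.univ.filter fun i : Fin n => ¬ N n i ω = 0).card ≤ n) →
      (∀ i, |Z n i ω| ≤ t n) → ω ∈ E n := by
    intro n hn ω hB hC hD
    simp only [hE, Set.mem_setOf_eq]
    intro k hk1 hk2
    set W : Fin n → ℝ := fun i => μc / n + (σ / Real.sqrt n) * Z n i ω + h * N n i ω with hW
    set a : ℝ := μc / n with ha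
    have hsq : (0:ℝ) < Real.sqrt n := Real.sqrt_pos.2 (by exact_mod_cast hn)
    have hbnd : ∀ i, |(σ / Real.sqrt n) * Z n i ω| ≤ h / 16 := by
      intro i
      rw [abs_mul, abs_of_nonneg (by positivity : (0:ℝ) ≤ σ / Real.sqrt n)]
      calc σ / Real.sqrt n * |Z n i ω| ≤ σ / Real.sqrt n * t n := by
            apply mul_le_mul_of_nonneg_left (hD i) (by positivity)
        _ = h / 16 := by
            rw [ht]
            field_simp
    have hWval : ∀ i, W i ≤ a + h/16 ∨ (a + h - h/16 ≤ W i ∧ W i ≤ a + h + h/16) := by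
      intro i
      have := hbnd i
      have habs := abs_le.1 this
      rcases hB i with h0 | h1
      · left
        simp only [hW, h0, mul_zero, add_zero]
        linarith [habs.2]
      · right
        simp only [hW, h1, mul_one]
        constructor <;> linarith [habs.1, habs.2]
    have hKeq : (Finset.univ.filter fun i : Fin n => W i ≤ a + h/16)
        = (Finset.univ.filter fun i : Fin n => N n i ω = 0) := by
      apply Finset.filter_congr
      intro i _
      have habs := abs_le.1 (hbnd i)
      rcases hB i with h0 | h1
      · simp only [h0, iff_true]
        simp only [hW, h0, mul_zero, add_zero]
        linarith [habs.2]
      · have : ¬ W i ≤ a + h/16 := by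
          simp only [hW, h1, mul_one]
          push_neg
          linarith [habs.1]
        simp only [this, false_iff, h1]
        norm_num
    have hcard : (Finset.univ.filter fun i : Fin n => N n i ω = 0).card
        + (Finset.univ.filter fun i : Fin n => ¬ N n i ω = 0).card = n := by
      rw [Finset.card_filter_add_card_filter_not, Finset.card_univ, Fintype.card_fin]
    apply ecf_nonpos W (a + h/16) (a + h - h/16) (a + h + h/16)
    · linarith
    · linarith
    · linarith
    · exact hWval
    · rw [hKeq]; omega
    · rw [hKeq]; omega
    · omega

  -- error bounds
  set εC : ℕ → ℝ≥0∞ := fun n => ENNReal.ofReal (2 * lam / n) with hεC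
  set εD : ℕ → ℝ≥0∞ := fun n =>
    ENNReal.ofReal ((n : ℝ) * (2 * Real.exp (1/2 - t n))) with hεD
  have hms01 : MeasurableSet (({0,1} : Set ℝ)ᶜ) :=
    ((measurableSet_singleton (1:ℝ)).insert 0).compl
  have hBbound : ∀ n : ℕ, P n {ω | ¬ ∀ i, N n i ω = 0 ∨ N n i ω = 1} = 0 := by
    intro n
    have hsub : {ω | ¬ ∀ i, N n i ω = 0 ∨ N n i ω = 1} ⊆
        ⋃ i, (N n i) ⁻¹' (({0,1} : Set ℝ)ᶜ) := by
      intro ω hω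
      push_neg at hω
      obtain ⟨i, hi0, hi1⟩ := hω
      exact Set.mem_iUnion.2 ⟨i, by simp [hi0, hi1]⟩
    refine le_antisymm ?_ (zero_le)
    calc P n _ ≤ P n (⋃ i, (N n i) ⁻¹' (({0,1} : Set ℝ)ᶜ)) := measure_mono hsub
      _ ≤ ∑ i, P n ((N n i) ⁻¹' (({0,1} : Set ℝ)ᶜ)) := measure_iUnion_fintype_le _ _
      _ = 0 := Finset.sum_eq_zero (fun i _ => by
          rw [← Measure.map_apply (hmeasN n i) hms01, hN n i, Measure.add_apply,
            Measure.smul_apply, Measure.smul_apply, Measure.dirac_apply' _ hms01,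
            Measure.dirac_apply' _ hms01]
          rw [Set.indicator_of_notMem (by simp), Set.indicator_of_notMem (by simp)]
          simp)
  have hCbound : ∀ n : ℕ, 1 ≤ n →
      P n {ω | ¬ 2 * (Finset.univ.filter fun i : Fin n => ¬ N n i ω = 0).card ≤ n} ≤ εC n := by
    intro n hn
    have hnR : (0:ℝ) < n := by exact_mod_cast hn
    set S : Fin n → Set (Ω n) := fun i => (N n i) ⁻¹' ({(0:ℝ)}ᶜ) with hS
    have hmS : ∀ i, MeasurableSet (S i) :=
      fun i => (hmeasN n i) (measurableSet_singleton (0:ℝ)).compl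
    set f : Ω n → ℝ≥0∞ := fun ω => ∑ i, (S i).indicator (fun _ => (1:ℝ≥0∞)) ω with hf
    have hfm : Measurable f :=
      Finset.measurable_sum _ (fun i _ => measurable_const.indicator (hmS i))
    have hPSi : ∀ i, P n (S i) = ENNReal.ofReal (lam / n) := by
      intro i
      rw [hS]
      rw [← Measure.map_apply (hmeasN n i) (measurableSet_singleton (0:ℝ)).compl, hN n i,
        Measure.add_apply, Measure.smul_apply, Measure.smul_apply,
        Measure.dirac_apply' _ (measurableSet_singleton (0:ℝ)).compl,
        Measure.dirac_apply' _ (measurableSet_singleton (0:ℝ)).compl]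
      rw [Set.indicator_of_notMem (by simp), Set.indicator_of_mem (by simp)]
      simp
    have hint : ∫⁻ ω, f ω ∂(P n) ≤ ENNReal.ofReal lam := by
      have h1 : ∫⁻ ω, f ω ∂(P n) = ∑ i : Fin n, P n (S i) := by
        simp only [hf]
        rw [lintegral_finset_sum _ (fun i _ => measurable_const.indicator (hmS i))]
        apply Finset.sum_congr rfl
        intro i _
        rw [lintegral_indicator (hmS i)]
        simp
      rw [h1]
      simp only [hPSi, Finset.sum_const, Finset.card_univ, Fintype.card_fin, nsmul_eq_mul]
      rw [← ENNReal.ofReal_natCast n, ← ENNReal.ofReal_mul (by positivity : (0:ℝ) ≤ (n:ℝ))]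
      apply le_of_eq
      congr 1
      field_simp
    have hn2 : ((n:ℝ≥0∞)/2) ≠ 0 := by
      apply ENNReal.div_ne_zero.2
      exact ⟨Nat.cast_ne_zero.2 (by omega), ENNReal.ofNat_ne_top⟩
    have hn2top : ((n:ℝ≥0∞)/2) ≠ ⊤ := by
      exact (ENNReal.div_lt_top (ENNReal.natCast_ne_top n) (by norm_num)).ne
    have hsub : {ω | ¬ 2 * (Finset.univ.filter fun i : Fin n => ¬ N n i ω = 0).card ≤ n}
        ⊆ {ω | ((n:ℝ≥0∞)/2) ≤ f ω} := by
      intro ω hω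
      simp only [Set.mem_setOf_eq, not_le] at hω
      have hfω : f ω = ((Finset.univ.filter fun i : Fin n => ¬ N n i ω = 0).card : ℝ≥0∞) := by
        simp only [hf]
        rw [Finset.card_filter]
        push_cast
        apply Finset.sum_congr rfl
        intro i _
        rw [Set.indicator_apply]
        by_cases hi : N n i ω = 0
        · simp [hS, Set.mem_preimage, hi]
        · simp [hS, Set.mem_preimage, hi]
      rw [Set.mem_setOf_eq, hfω]
      rw [ENNReal.div_le_iff_le_mul (Or.inl two_ne_zero) (Or.inl ENNReal.ofNat_ne_top)]
      have : n ≤ (Finset.univ.filter fun i : Fin n => ¬ N n i ω = 0).card * 2 := by omega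
      exact_mod_cast this
    calc P n _ ≤ P n {ω | ((n:ℝ≥0∞)/2) ≤ f ω} := measure_mono hsub
      _ ≤ (∫⁻ ω, f ω ∂ P n) / ((n:ℝ≥0∞)/2) := by
          rw [ENNReal.le_div_iff_mul_le (Or.inl hn2) (Or.inl hn2top), mul_comm]
          exact mul_meas_ge_le_lintegral₀ hfm.aemeasurable _
      _ ≤ ENNReal.ofReal lam / ((n:ℝ≥0∞)/2) := by gcongr
      _ = εC n := by
          have h2 : ((n:ℝ≥0∞)/2) = ENNReal.ofReal ((n:ℝ)/2) := by
            rw [ENNReal.ofReal_div_of_pos (by norm_num), ENNReal.ofReal_natCast,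
              ENNReal.ofReal_ofNat]
          rw [h2, ← ENNReal.ofReal_div_of_pos (by positivity : (0:ℝ) < (n:ℝ)/2)]
          simp only [hεC]
          congr 1
          field_simp
  have hDbound : ∀ n : ℕ, P n {ω | ¬ ∀ i, |Z n i ω| ≤ t n} ≤ εD n := by
    intro n
    have hmsT : MeasurableSet {x : ℝ | t n < |x|} :=
      measurableSet_lt measurable_const measurable_abs
    have hsub : {ω | ¬ ∀ i, |Z n i ω| ≤ t n} ⊆
        ⋃ i, (Z n i) ⁻¹' {x : ℝ | t n < |x|} := by
      intro ω hω
      push_neg at hω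
      obtain ⟨i, hi⟩ := hω
      exact Set.mem_iUnion.2 ⟨i, by simpa using hi⟩
    calc P n _ ≤ P n (⋃ i, (Z n i) ⁻¹' {x : ℝ | t n < |x|}) := measure_mono hsub
      _ ≤ ∑ i, P n ((Z n i) ⁻¹' {x : ℝ | t n < |x|}) := measure_iUnion_fintype_le _ _
      _ ≤ ∑ _i : Fin n, ENNReal.ofReal (2 * Real.exp (1/2 - t n)) := by
          apply Finset.sum_le_sum
          intro i _
          rw [← Measure.map_apply (hmeasZ n i) hmsT, hZ n i]
          exact gaussian_tail (t n)
      _ = εD n := by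
          rw [Finset.sum_const, Finset.card_univ, Fintype.card_fin, nsmul_eq_mul]
          simp only [hεD]
          rw [ENNReal.ofReal_mul (by positivity : (0:ℝ) ≤ (n:ℝ))]
          congr 1
          exact (ENNReal.ofReal_natCast n).symm
  -- lower bound for P (E n)
  have hlow : ∀ n : ℕ, 1 ≤ n → 1 - (εC n + εD n) ≤ P n (E n) := by
    intro n hn
    have hcover : (univ : Set (Ω n)) ⊆ E n ∪
        ({ω | ¬ ∀ i, N n i ω = 0 ∨ N n i ω = 1} ∪
         ({ω | ¬ 2 * (Finset.univ.filter fun i : Fin n => ¬ N n i ω = 0).card ≤ n} ∪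
          {ω | ¬ ∀ i, |Z n i ω| ≤ t n})) := by
      intro ω _
      by_cases h1 : ∀ i, N n i ω = 0 ∨ N n i ω = 1
      · by_cases h2 : 2 * (Finset.univ.filter fun i : Fin n => ¬ N n i ω = 0).card ≤ n
        · by_cases h3 : ∀ i, |Z n i ω| ≤ t n
          · exact Or.inl (key n hn ω h1 h2 h3)
          · exact Or.inr (Or.inr (Or.inr h3))
        · exact Or.inr (Or.inr (Or.inl h2))
      · exact Or.inr (Or.inl h1)
    have h1 : (1 : ℝ≥0∞) = P n univ := (measure_univ).symm
    have h2 : P n univ ≤ P n (E n) + (εC n + εD n) := by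
      calc P n univ ≤ P n (E n ∪ _) := measure_mono hcover
        _ ≤ P n (E n) + P n ({ω | ¬ ∀ i, N n i ω = 0 ∨ N n i ω = 1} ∪
            ({ω | ¬ 2 * (Finset.univ.filter fun i : Fin n => ¬ N n i ω = 0).card ≤ n} ∪
             {ω | ¬ ∀ i, |Z n i ω| ≤ t n})) := measure_union_le _ _
        _ ≤ P n (E n) + (P n {ω | ¬ ∀ i, N n i ω = 0 ∨ N n i ω = 1} +
            (P n {ω | ¬ 2 * (Finset.univ.filter fun i : Fin n => ¬ N n i ω = 0).card ≤ n} +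
             P n {ω | ¬ ∀ i, |Z n i ω| ≤ t n})) := by
          gcongr
          calc P n _ ≤ _ + P n _ := measure_union_le _ _
            _ ≤ _ + (_ + _) := by gcongr; exact measure_union_le _ _
        _ ≤ P n (E n) + (0 + (εC n + εD n)) := by
          gcongr
          · exact le_of_eq (hBbound n)
          · exact hCbound n hn
          · exact hDbound n
        _ = P n (E n) + (εC n + εD n) := by rw [zero_add]
    rw [h1]
    exact tsub_le_iff_right.2 h2
  -- convergence of error terms
  have herr : Tendsto (fun n => εC n + εD n) atTop (nhds 0) := by
    have hsum : ∀ n : ℕ, εC n + εD n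
        = ENNReal.ofReal (2*lam/n + (n:ℝ)*(2*Real.exp (1/2 - t n))) := by
      intro n
      simp only [hεC, hεD]
      rw [ENNReal.ofReal_add (by positivity) (by positivity)]
    set c : ℝ := h / (16*σ) with hc
    have hc0 : 0 < c := by positivity
    have hreal : Tendsto (fun n : ℕ => 2*lam/n + (n:ℝ)*(2*Real.exp (1/2 - t n)))
        atTop (nhds 0) := by
      have h1 : Tendsto (fun n : ℕ => 2*lam/(n:ℝ)) atTop (nhds 0) :=
        tendsto_const_div_atTop_nhds_zero_nat (2*lam)
      have h2 : Tendsto (fun n : ℕ => (n:ℝ)*(2*Real.exp (1/2 - t n))) atTop (nhds 0) := by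
        have hbase : Tendsto (fun y : ℝ => y^2 * Real.exp (-y)) atTop (nhds 0) :=
          Real.tendsto_pow_mul_exp_neg_atTop_nhds_zero 2
        have hlin : Tendsto (fun x : ℝ => c * x) atTop atTop :=
          Tendsto.const_mul_atTop hc0 tendsto_id
        have hcomp : Tendsto (fun x : ℝ => (c*x)^2 * Real.exp (-(c*x))) atTop (nhds 0) :=
          hbase.comp hlin
        have hg : Tendsto (fun x : ℝ =>
            (2*Real.exp (1/2) * (1/c)^2) * ((c*x)^2 * Real.exp (-(c*x)))) atTop (nhds 0) := by
          have := hcomp.const_mul (2*Real.exp (1/2) * (1/c)^2)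
          simpa using this
        have hsq : Tendsto (fun n : ℕ => Real.sqrt n) atTop atTop := by
          have ha := (tendsto_rpow_atTop (by norm_num : (0:ℝ) < 1/2)).comp
            tendsto_natCast_atTop_atTop (α := ℕ)
          exact ha.congr fun n => (Real.sqrt_eq_rpow _).symm
        have hfin := hg.comp hsq
        apply hfin.congr
        intro n
        have hct : c * Real.sqrt n = t n := by
          rw [ht, hc]
          field_simp
        have hsqn : Real.sqrt n ^ 2 = (n:ℝ) := Real.sq_sqrt (Nat.cast_nonneg n)
        have h3 : (1/c)^2 * (c * Real.sqrt n)^2 = (n:ℝ) := by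
          rw [← mul_pow, show (1/c)*(c*Real.sqrt n) = Real.sqrt n by field_simp]
          exact hsqn
        simp only [Function.comp_apply]
        rw [hct] at h3
        rw [hct]
        have hAB : Real.exp (1/2 - t n) = Real.exp (1/2) * Real.exp (-(t n)) := by
          rw [← Real.exp_add]; ring_nf
        rw [hAB]
        linear_combination (2*Real.exp (1/2)*Real.exp (-(t n))) * h3
      have := h1.add h2
      simpa using this
    have := ENNReal.tendsto_ofReal hreal
    simp only [ENNReal.ofReal_zero] at this
    exact Tendsto.congr (fun n => (hsum n).symm) this
  -- squeeze
  have hlim : Tendsto (fun n => 1 - (εC n + εD n)) atTop (nhds 1) := by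
    have hc : Continuous (fun x : ℝ≥0∞ => 1 - x) := ENNReal.continuous_sub_left ENNReal.one_ne_top
    have := (hc.tendsto 0).comp herr
    simpa [Function.comp_def] using this
  refine tendsto_of_tendsto_of_tendsto_of_le_of_le' hlim tendsto_const_nhds ?_ ?_
  · filter_upwards [eventually_ge_atTop 1] with n hn
    exact hlow n hn
  · filter_upwards with n
    exact prob_le_one
end

section
/- Let W be a real random variable with distribution function F satisfying assumptions A1–A3 and E[|W|] < ∞. Then the cross-over function G is differentiable at every p ∈ (0,1) with G'(p) = (1/p)[Q(p) − (1/p)E[W·1_{W ≤ Q(p)}]] − (1/(1−p))[Q(p) − (1/(1−p))E[W·1_{W > Q(p)}]] − 2Q'(p). -/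
open MeasureTheory Filter Set Topology

/-- The cross-over function
`G(p) = (1/p) E[W 1_{W ≤ Q(p)}] + (1/(1-p)) E[W 1_{W > Q(p)}] - 2 Q(p)`. -/
noncomputable def crossOver (μ : Measure ℝ) (Q : ℝ → ℝ) (p : ℝ) : ℝ :=
  (1 / p) * ∫ x in Iic (Q p), x ∂μ + (1 / (1 - p)) * ∫ x in Ioi (Q p), x ∂μ - 2 * Q p

/-- Under A1–A3 and `E|W| < ∞`, the cross-over function `G` is differentiable
at every `p ∈ (0,1)` with
`G'(p) = (1/p)[Q(p) - (1/p)E[W 1_{W ≤ Q(p)}]] - (1/(1-p))[Q(p) - (1/(1-p))E[W 1_{W > Q(p)}]]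
 - 2 Q'(p)`. -/
theorem stmt12 (μ : Measure ℝ) (f Q : ℝ → ℝ)
    -- A1
    (hf : ∀ x, 0 ≤ f x)
    (hdens : μ = volume.withDensity fun x => ENNReal.ofReal (f x))
    (hQF : ∀ p ∈ Ioo (0 : ℝ) 1, (μ (Iic (Q p))).toReal = p)
    (hQuniq : ∀ p ∈ Ioo (0 : ℝ) 1, ∀ x : ℝ, (μ (Iic x)).toReal = p → x = Q p)
    -- A2
    (hmean : ∫ x, x ∂μ = 0)
    (hvar : ∫ x, x ^ 2 ∂μ = 1)
    -- A3
    (hQsmooth : ∀ p ∈ Ioo (0 : ℝ) 1, ContDiffAt ℝ 2 Q p)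
    -- integrability: E|W| < ∞
    (hint : Integrable (fun x => x) μ) :
    ∀ p ∈ Ioo (0 : ℝ) 1,
      HasDerivAt (crossOver μ Q)
        ((1 / p) * (Q p - (1 / p) * ∫ x in Iic (Q p), x ∂μ)
          - (1 / (1 - p)) * (Q p - (1 / (1 - p)) * ∫ x in Ioi (Q p), x ∂μ)
          - 2 * deriv Q p) p := by
  intro p hp
  obtain ⟨hp0, hp1⟩ := hp
  have hpI : p ∈ Ioo (0 : ℝ) 1 := ⟨hp0, hp1⟩
  set A : ℝ → ℝ := fun s => ∫ x in Iic (Q s), x ∂μ with hAdef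
  -- finiteness of the measure of lower tails
  have hfin : ∀ t ∈ Ioo (0 : ℝ) 1, μ (Iic (Q t)) ≠ ⊤ := by
    intro t ht h
    have h2 := hQF t ht
    rw [h, ENNReal.toReal_top] at h2
    exact absurd h2.symm (ne_of_gt ht.1)
  -- Q is strictly monotone on (0,1)
  have hmono : ∀ a ∈ Ioo (0 : ℝ) 1, ∀ b ∈ Ioo (0 : ℝ) 1, a < b → Q a < Q b := by
    intro a ha b hb hab
    by_contra h
    push_neg at h
    have h1 : μ (Iic (Q b)) ≤ μ (Iic (Q a)) := measure_mono (Iic_subset_Iic.mpr h)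
    have h2 := ENNReal.toReal_mono (hfin a ha) h1
    rw [hQF a ha, hQF b hb] at h2
    linarith
  -- measure of the slab
  have hmeas : ∀ a ∈ Ioo (0 : ℝ) 1, ∀ b ∈ Ioo (0 : ℝ) 1, a < b →
      (μ (Ioc (Q a) (Q b))).toReal = b - a := by
    intro a ha b hb hab
    have hQ : Q a ≤ Q b := (hmono a ha b hb hab).le
    have hdiff : Ioc (Q a) (Q b) = Iic (Q b) \ Iic (Q a) := by
      ext x; simp only [mem_Ioc, mem_diff, mem_Iic, not_le]; exact and_comm
    rw [hdiff, measure_diff (Iic_subset_Iic.mpr hQ) measurableSet_Iic.nullMeasurableSet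
        (hfin a ha),
      ENNReal.toReal_sub_of_le (measure_mono (Iic_subset_Iic.mpr hQ)) (hfin b hb),
      hQF a ha, hQF b hb]
  -- splitting the integral
  have hsplit : ∀ a ∈ Ioo (0 : ℝ) 1, ∀ b ∈ Ioo (0 : ℝ) 1, a < b →
      A b - A a = ∫ x in Ioc (Q a) (Q b), x ∂μ := by
    intro a ha b hb hab
    have hQ : Q a ≤ Q b := (hmono a ha b hb hab).le
    have hu := setIntegral_union (μ := μ) (f := fun x : ℝ => x)
      (s := Iic (Q a)) (t := Ioc (Q a) (Q b))
      (Set.Iic_disjoint_Ioc (le_refl (Q a))) measurableSet_Ioc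
      hint.integrableOn hint.integrableOn
    rw [Iic_union_Ioc_eq_Iic hQ] at hu
    simp only [hAdef]
    linarith
  -- the key estimate
  have hbound : ∀ a ∈ Ioo (0 : ℝ) 1, ∀ b ∈ Ioo (0 : ℝ) 1, a < b → ∀ c : ℝ, Q a ≤ c → c ≤ Q b →
      ‖(A b - A a) - (b - a) * c‖ ≤ (Q b - Q a) * (b - a) := by
    intro a ha b hb hab c hc1 hc2
    rw [hsplit a ha b hb hab]
    have hμlt : μ (Ioc (Q a) (Q b)) < ⊤ :=
      lt_of_le_of_lt (measure_mono Ioc_subset_Iic_self) (lt_top_iff_ne_top.mpr (hfin b hb))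
    have hconst : IntegrableOn (fun _ : ℝ => c) (Ioc (Q a) (Q b)) μ :=
      integrableOn_const hμlt.ne
    have heq : (∫ x in Ioc (Q a) (Q b), x ∂μ) - (b - a) * c
        = ∫ x in Ioc (Q a) (Q b), (x - c) ∂μ := by
      rw [integral_sub hint.integrableOn hconst, setIntegral_const,
        measureReal_def, hmeas a ha b hb hab, smul_eq_mul]
    rw [heq]
    have hB := norm_setIntegral_le_of_norm_le_const (μ := μ) (s := Ioc (Q a) (Q b))
      (f := fun x : ℝ => x - c) (C := Q b - Q a) hμlt
      (fun x hx => by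
        show ‖x - c‖ ≤ Q b - Q a
        rw [Real.norm_eq_abs, abs_le]
        exact ⟨by linarith [hx.1], by linarith [hx.2]⟩)
    rwa [measureReal_def, hmeas a ha b hb hab] at hB
  -- derivative of A
  have hA : HasDerivAt A (Q p) p := by
    rw [hasDerivAt_iff_isLittleO, Asymptotics.isLittleO_iff]
    intro c hc
    have hQcont : ContinuousAt Q p := (hQsmooth p hpI).continuousAt
    have htend : Tendsto (fun s => Q s - Q p) (𝓝 p) (𝓝 (Q p - Q p)) :=
      hQcont.tendsto.sub tendsto_const_nhds
    rw [sub_self] at htend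
    have h1 : ∀ᶠ s in 𝓝 p, ‖Q s - Q p‖ < c :=
      NormedAddCommGroup.tendsto_nhds_zero.mp htend c hc
    have h2 : ∀ᶠ s in 𝓝 p, s ∈ Ioo (0 : ℝ) 1 := isOpen_Ioo.mem_nhds hpI
    filter_upwards [h1, h2] with s hs1 hs2
    rcases lt_trichotomy s p with h | h | h
    · have hQsp : Q s < Q p := hmono s hs2 p hpI h
      have hb := hbound s hs2 p hpI h (Q p) hQsp.le le_rfl
      rw [Real.norm_eq_abs] at hb hs1 ⊢
      rw [Real.norm_eq_abs, smul_eq_mul]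
      have e1 : |A s - A p - (s - p) * Q p| = |(A p - A s) - (p - s) * Q p| := by
        rw [← abs_neg]; ring_nf
      rw [e1]
      have e2 : |s - p| = p - s := by rw [abs_of_neg (by linarith)]; ring
      have e3 : |Q s - Q p| = Q p - Q s := by rw [abs_of_neg (by linarith)]; ring
      rw [e2]
      rw [e3] at hs1
      nlinarith
    · simp [h]
    · have hQps : Q p < Q s := hmono p hpI s hs2 h
      have hb := hbound p hpI s hs2 h (Q p) le_rfl hQps.le
      rw [Real.norm_eq_abs] at hb hs1 ⊢
      rw [Real.norm_eq_abs, smul_eq_mul]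
      have e2 : |s - p| = s - p := abs_of_pos (by linarith)
      have e3 : |Q s - Q p| = Q s - Q p := abs_of_pos (by linarith)
      rw [e2]
      rw [e3] at hs1
      have e1 : |A s - A p - (s - p) * Q p| = |(A s - A p) - (s - p) * Q p| := by ring_nf
      rw [e1]
      nlinarith
  -- upper-tail integral in terms of A
  have hBA : ∀ t : ℝ, (∫ x in Ioi t, x ∂μ) = -∫ x in Iic t, x ∂μ := by
    intro t
    have h := integral_add_compl (measurableSet_Iic (a := t)) hint
    rw [compl_Iic, hmean] at h
    linarith
  -- rewrite crossOver
  have hGeq : crossOver μ Q = fun s => s⁻¹ * A s + (1 - s)⁻¹ * (-(A s)) - 2 * Q s := by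
    funext s
    rw [crossOver, hBA (Q s)]
    simp only [hAdef, one_div]
  -- assemble
  have hQd : HasDerivAt Q (deriv Q p) p :=
    ((hQsmooth p hpI).differentiableAt (by norm_num)).hasDerivAt
  have hinv1 : HasDerivAt (fun s : ℝ => s⁻¹) (-(p ^ 2)⁻¹) p := hasDerivAt_inv (ne_of_gt hp0)
  have hsub : HasDerivAt (fun s : ℝ => 1 - s) (-1) p := by
    simpa using (hasDerivAt_id p).const_sub 1
  have hinv2 : HasDerivAt (fun s : ℝ => (1 - s)⁻¹) (-(-1) / (1 - p) ^ 2) p :=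
    hsub.inv (sub_ne_zero.mpr hp1.ne')
  have hterm : HasDerivAt (fun s => s⁻¹ * A s + (1 - s)⁻¹ * (-(A s)) - 2 * Q s)
      ((-(p ^ 2)⁻¹ * A p + p⁻¹ * Q p)
        + ((-(-1) / (1 - p) ^ 2) * (-(A p)) + (1 - p)⁻¹ * (-(Q p))) - 2 * deriv Q p) p :=
    ((hinv1.mul hA).add (hinv2.mul hA.neg)).sub (hQd.const_mul 2)
  rw [hGeq]
  convert hterm using 1
  rw [hBA (Q p)]
  have hAp : (∫ x in Iic (Q p), x ∂μ) = A p := rfl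
  rw [hAp]
  have h1p : (1 : ℝ) - p ≠ 0 := by intro h; rw [sub_eq_zero] at h; linarith
  field_simp
  ring
end
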